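/- For every p ∈ [1, ∞) and ε ∈ (0,1), the integral ∫₀^∞ (1 - cos t)^{p/2} / t^{1 + (1-ε)p/2} dt is finite, and (∫₀^∞ (1 - cos t)^{p/2} / t^{1+(1-ε)p/2} dt)^{1/p} is bounded above and below by universal constant multiples of 1/(1-ε)^{1/p}. -/

import Mathlib

open MeasureTheory Real Set

lemma shift_setIntegral (f : ℝ → ℝ) (a c : ℝ) :
    ∫ x in Ioi a, f (x + c) = ∫ x in Ioi (a + c), f x := by
  have h := (measurePreserving_add_right volume c).setIntegral_preimage_emb
    (MeasurableEquiv.addRight c).measurableEmbedding f (Ioi (a + c))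
  simpa [MeasurableEquiv.addRight, preimage_add_const_Ioi] using h

lemma shift_integrableOn {f : ℝ → ℝ} {a : ℝ} (c : ℝ)
    (h : IntegrableOn f (Ioi (a + c)) volume) :
    IntegrableOn (fun x => f (x + c)) (Ioi a) volume := by
  have h2 := ((measurePreserving_add_right volume c).integrableOn_comp_preimage
    (MeasurableEquiv.addRight c).measurableEmbedding (f := f) (s := Ioi (a+c))).mpr h
  simpa [MeasurableEquiv.addRight, preimage_add_const_Ioi, Function.comp_def] using h2

lemma le_two_rpow {p : ℝ} (hp : 1 ≤ p) : p ≤ (2:ℝ) ^ p := by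
  have hp0 : 0 < p := lt_of_lt_of_le one_pos hp
  have h2 : (2:ℝ) ^ p = Real.exp (p * Real.log 2) := by
    rw [Real.rpow_def_of_pos two_pos]; ring_nf
  have hsq : Real.sqrt p ^ 2 = p := Real.sq_sqrt hp0.le
  have h1 : Real.log (Real.sqrt p) ≤ Real.sqrt p - 1 :=
    Real.log_le_sub_one_of_pos (Real.sqrt_pos.mpr hp0)
  have hlogp : Real.log p = 2 * Real.log (Real.sqrt p) := by
    rw [Real.log_sqrt hp0.le]; ring
  have hlog2 : (0.6931471803:ℝ) < Real.log 2 := Real.log_two_gt_d9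
  have key2 : 2 * Real.sqrt p - 2 ≤ Real.sqrt p ^ 2 * Real.log 2 := by
    nlinarith [mul_nonneg (show (0:ℝ) ≤ Real.log 2 by linarith)
      (sq_nonneg (Real.log 2 * Real.sqrt p - 1)), sq_nonneg (Real.log 2 * Real.sqrt p - 1)]
  have key : Real.log p ≤ p * Real.log 2 := by
    rw [hlogp]; rw [hsq] at key2; linarith
  calc p = Real.exp (Real.log p) := (Real.exp_log hp0).symm
    _ ≤ Real.exp (p * Real.log 2) := Real.exp_le_exp.mpr key
    _ = 2 ^ p := h2.symm

set_option maxHeartbeats 1000000 in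
theorem stmt3 : ∃ c C : ℝ, 0 < c ∧ 0 < C ∧ ∀ (p ε : ℝ), p ∈ Set.Ici (1:ℝ) → ε ∈ Set.Ioo (0:ℝ) 1 →
    IntegrableOn (fun t : ℝ => (1 - Real.cos t) ^ (p/2) / t ^ (1 + (1-ε)*p/2)) (Set.Ioi 0) volume ∧
    c * (1 / (1-ε) ^ (1/p)) ≤
      (∫ t in Set.Ioi (0:ℝ), (1 - Real.cos t) ^ (p/2) / t ^ (1 + (1-ε)*p/2)) ^ (1/p) ∧
    (∫ t in Set.Ioi (0:ℝ), (1 - Real.cos t) ^ (p/2) / t ^ (1 + (1-ε)*p/2)) ^ (1/p) ≤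
      C * (1 / (1-ε) ^ (1/p)) := by
  refine ⟨1/4, 8, by norm_num, by norm_num, ?_⟩
  rintro p ε hp ⟨hε0, hε1⟩
  rw [Set.mem_Ici] at hp
  have hp0 : (0:ℝ) < p := lt_of_lt_of_le one_pos hp
  have hε1' : (0:ℝ) < 1 - ε := by linarith
  set s : ℝ := (1 - ε) * p / 2 with hs_def
  have hs0 : 0 < s := by rw [hs_def]; positivity
  have hsp : s ≤ p / 2 := by rw [hs_def]; nlinarith
  set f : ℝ → ℝ := fun t => (1 - Real.cos t) ^ (p / 2) / t ^ (1 + s) with hf_def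
  -- basic facts
  have hf_nonneg : ∀ t : ℝ, t ∈ Ioi (0:ℝ) → 0 ≤ f t := by
    intro t ht
    have h1 : (0:ℝ) ≤ 1 - Real.cos t := by nlinarith [Real.cos_le_one t]
    exact div_nonneg (Real.rpow_nonneg h1 _) (Real.rpow_nonneg (le_of_lt ht) _)
  have hcont : ContinuousOn f (Ioi 0) := by
    apply ContinuousOn.div
    · exact ((continuous_const.sub Real.continuous_cos).rpow_const
        (fun x => Or.inr (by positivity))).continuousOn
    · exact fun t ht =>
        (Real.continuousAt_rpow_const t (1+s) (Or.inl (ne_of_gt ht))).continuousWithinAt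
    · exact fun t ht => (Real.rpow_pos_of_pos ht _).ne'
  -- pointwise upper bounds
  have hr1 : (-1:ℝ) < p - (1 + s) := by nlinarith
  have hub1 : ∀ t ∈ Ioc (0:ℝ) 1, f t ≤ t ^ (p - (1 + s)) := by
    rintro t ⟨ht0, ht1⟩
    have hcos : 1 - Real.cos t ≤ t ^ 2 := by
      nlinarith [Real.one_sub_sq_div_two_le_cos (x := t), sq_nonneg t]
    have h0 : (0:ℝ) ≤ 1 - Real.cos t := by nlinarith [Real.cos_le_one t]
    have h2 : (1 - Real.cos t) ^ (p / 2) ≤ (t ^ 2) ^ (p / 2) :=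
      Real.rpow_le_rpow h0 hcos (by positivity)
    have h3 : ((t:ℝ) ^ 2) ^ (p / 2) = t ^ p := by
      rw [← Real.rpow_natCast t 2, ← Real.rpow_mul ht0.le]
      norm_num
      congr 1
      ring
    calc f t = (1 - Real.cos t) ^ (p / 2) / t ^ (1 + s) := rfl
      _ ≤ (t ^ 2) ^ (p / 2) / t ^ (1 + s) := by gcongr
      _ = t ^ p / t ^ (1 + s) := by rw [h3]
      _ = t ^ (p - (1 + s)) := by rw [← Real.rpow_sub ht0]
  have hub2 : ∀ t ∈ Ioi (1:ℝ), f t ≤ 2 ^ (p / 2) * t ^ (-(1 + s)) := by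
    intro t ht
    have ht0 : (0:ℝ) < t := lt_trans one_pos ht
    have h0 : (0:ℝ) ≤ 1 - Real.cos t := by nlinarith [Real.cos_le_one t]
    have h2 : (1 - Real.cos t) ^ (p / 2) ≤ 2 ^ (p / 2) :=
      Real.rpow_le_rpow h0 (by nlinarith [Real.neg_one_le_cos t]) (by positivity)
    calc f t = (1 - Real.cos t) ^ (p / 2) / t ^ (1 + s) := rfl
      _ ≤ 2 ^ (p / 2) / t ^ (1 + s) := by gcongr
      _ = 2 ^ (p / 2) * t ^ (-(1 + s)) := by
          rw [Real.rpow_neg ht0.le, div_eq_mul_inv]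
  -- integrability
  have hmble1 : AEStronglyMeasurable f (volume.restrict (Ioc (0:ℝ) 1)) :=
    (hcont.mono Ioc_subset_Ioi_self).aestronglyMeasurable measurableSet_Ioc
  have hmble2 : AEStronglyMeasurable f (volume.restrict (Ioi (1:ℝ))) :=
    (hcont.mono (Ioi_subset_Ioi zero_le_one)).aestronglyMeasurable measurableSet_Ioi
  have hgint1 : IntegrableOn (fun t : ℝ => t ^ (p - (1 + s))) (Ioc (0:ℝ) 1) volume := by
    have := intervalIntegral.intervalIntegrable_rpow' (a := 0) (b := 1) hr1
    rwa [intervalIntegrable_iff_integrableOn_Ioc_of_le zero_le_one] at this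
  have hgint2 : IntegrableOn (fun t : ℝ => 2 ^ (p/2) * t ^ (-(1 + s))) (Ioi (1:ℝ)) volume :=
    (integrableOn_Ioi_rpow_of_lt (by linarith) one_pos).const_mul _
  have hint1 : IntegrableOn f (Ioc (0:ℝ) 1) volume := by
    apply Integrable.mono' hgint1 hmble1
    filter_upwards [ae_restrict_mem measurableSet_Ioc] with t ht
    rw [Real.norm_eq_abs, abs_of_nonneg (hf_nonneg t ht.1)]
    exact hub1 t ht
  have hint2 : IntegrableOn f (Ioi (1:ℝ)) volume := by
    apply Integrable.mono' hgint2 hmble2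
    filter_upwards [ae_restrict_mem measurableSet_Ioi] with t ht
    rw [Real.norm_eq_abs, abs_of_nonneg (hf_nonneg t (mem_Ioi.mpr (lt_trans one_pos (mem_Ioi.mp ht))))]
    exact hub2 t ht
  have hunion : Ioc (0:ℝ) 1 ∪ Ioi 1 = Ioi 0 := Ioc_union_Ioi_eq_Ioi zero_le_one
  have hint : IntegrableOn f (Ioi (0:ℝ)) volume := by
    rw [← hunion]; exact hint1.union hint2
  -- the integral and its splitting
  set I : ℝ := ∫ t in Ioi (0:ℝ), f t with hI_def
  have hI_nonneg : 0 ≤ I := setIntegral_nonneg measurableSet_Ioi hf_nonneg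
  have hsplit : I = (∫ t in Ioc (0:ℝ) 1, f t) + ∫ t in Ioi (1:ℝ), f t := by
    rw [hI_def, ← hunion,
      setIntegral_union (Ioc_disjoint_Ioi le_rfl) measurableSet_Ioi hint1 hint2]
  have hpiece1 : (∫ t in Ioc (0:ℝ) 1, f t) ≤ 2 := by
    have h1 : (∫ t in Ioc (0:ℝ) 1, f t) ≤ ∫ t in Ioc (0:ℝ) 1, t ^ (p - (1+s)) :=
      setIntegral_mono_on hint1 hgint1 measurableSet_Ioc hub1
    have h2 : (∫ t in Ioc (0:ℝ) 1, (t:ℝ) ^ (p - (1+s))) = 1 / (p - s) := by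
      rw [← intervalIntegral.integral_of_le zero_le_one, integral_rpow (Or.inl hr1),
        Real.one_rpow, Real.zero_rpow (by nlinarith)]
      rw [show p - (1 + s) + 1 = p - s by ring]
      norm_num
    have h3 : 1 / (p - s) ≤ 2 := by
      rw [div_le_iff₀ (by nlinarith)]; nlinarith
    linarith
  have hpiece2 : (∫ t in Ioi (1:ℝ), f t) ≤ 2 ^ (p/2) / s := by
    have h1 : (∫ t in Ioi (1:ℝ), f t) ≤ ∫ t in Ioi (1:ℝ), 2 ^ (p/2) * t ^ (-(1+s)) :=
      setIntegral_mono_on hint2 hgint2 measurableSet_Ioi hub2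
    have h2 : (∫ t in Ioi (1:ℝ), 2 ^ (p/2) * t ^ (-(1+s))) = 2 ^ (p/2) / s := by
      rw [MeasureTheory.integral_const_mul, integral_Ioi_rpow_of_lt (by linarith) one_pos,
        Real.one_rpow, show -(1+s) + 1 = -s by ring]
      field_simp
    linarith
  have hA0 : (0:ℝ) < 2 ^ (p/2) := Real.rpow_pos_of_pos two_pos _
  have hA1 : (1:ℝ) ≤ 2 ^ (p/2) := Real.one_le_rpow one_le_two (by positivity)
  have hIub : I ≤ 2 ^ (p/2) * 4 / (1 - ε) := by
    have h1 : 2 ^ (p/2) / s ≤ 2 * 2 ^ (p/2) / (1 - ε) := by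
      rw [div_le_div_iff₀ hs0 hε1']
      nlinarith [mul_pos hA0 hε1']
    have h2 : (2:ℝ) ≤ 2 * 2 ^ (p/2) / (1 - ε) := by
      rw [le_div_iff₀ hε1']
      nlinarith
    have h3 : 2 * (2 * 2 ^ (p/2) / (1 - ε)) = 2 ^ (p/2) * 4 / (1 - ε) := by ring
    linarith
  have hd0 : 0 < (1-ε) ^ (1/p) := Real.rpow_pos_of_pos hε1' _
  have hfinal_ub : I ^ (1/p) ≤ 8 * (1 / (1-ε) ^ (1/p)) := by
    have h1 : I ^ (1/p) ≤ (2 ^ (p/2) * 4 / (1-ε)) ^ (1/p) :=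
      Real.rpow_le_rpow hI_nonneg hIub (by positivity)
    have h2 : ((2:ℝ) ^ (p/2) * 4 / (1-ε)) ^ (1/p)
        = (2 ^ (p/2) * 4) ^ (1/p) / (1-ε) ^ (1/p) :=
      Real.div_rpow (by positivity) hε1'.le _
    have e22 : (2:ℝ) ^ (2:ℝ) = 4 := by
      rw [show (2:ℝ) = ((2:ℕ):ℝ) by norm_num, Real.rpow_natCast]; norm_num
    have e1 : ((2:ℝ) ^ (p/2) * 4) = 2 ^ (p/2 + 2) := by
      rw [Real.rpow_add two_pos, e22]
    have h3 : ((2:ℝ) ^ (p/2) * 4) ^ (1/p) ≤ 8 := by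
      rw [e1, ← Real.rpow_mul (by norm_num : (0:ℝ) ≤ 2)]
      have hexp : (p/2 + 2) * (1/p) ≤ 3 := by
        rw [show (p/2+2)*(1/p) = (p/2+2)/p by ring, div_le_iff₀ hp0]
        nlinarith
      calc (2:ℝ) ^ ((p/2+2) * (1/p)) ≤ 2 ^ (3:ℝ) :=
            Real.rpow_le_rpow_of_exponent_le one_le_two hexp
        _ = 8 := by
            rw [show (3:ℝ) = ((3:ℕ):ℝ) by norm_num, Real.rpow_natCast]; norm_num
    calc I ^ (1/p) ≤ (2 ^ (p/2) * 4) ^ (1/p) / (1-ε) ^ (1/p) := by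
          rw [← h2]; exact h1
      _ ≤ 8 / (1-ε) ^ (1/p) := by gcongr
      _ = 8 * (1 / (1-ε) ^ (1/p)) := by ring
  -- lower bound
  have hπ : (0:ℝ) < π := Real.pi_pos
  have hintπ : IntegrableOn f (Ioi π) volume := hint.mono_set (Ioi_subset_Ioi hπ.le)
  have hshift : IntegrableOn (fun t => f (t + π)) (Ioi (0:ℝ)) volume := by
    apply shift_integrableOn
    rwa [zero_add]
  have hgint : IntegrableOn (fun t : ℝ => (t + π) ^ (-(1+s))) (Ioi (0:ℝ)) volume := by
    apply shift_integrableOn (f := fun t : ℝ => t ^ (-(1+s)))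
    rw [zero_add]
    exact integrableOn_Ioi_rpow_of_lt (by linarith) hπ
  have key : ∀ t ∈ Ioi (0:ℝ), (t + π) ^ (-(1+s)) ≤ f t + f (t + π) := by
    intro t ht
    have ht0 : (0:ℝ) < t := ht
    have htπ : (0:ℝ) < t + π := by linarith
    have hrw : (t + π) ^ (-(1+s)) = 1 / (t+π) ^ (1+s) := by
      rw [Real.rpow_neg htπ.le, one_div]
    have hmono : (1:ℝ) / (t+π) ^ (1+s) ≤ 1 / t ^ (1+s) := by
      apply one_div_le_one_div_of_le (Real.rpow_pos_of_pos ht0 _)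
      exact Real.rpow_le_rpow ht0.le (by linarith) (by positivity)
    rcases le_or_gt (Real.cos t) 0 with h | h
    · have h1 : (1:ℝ) ≤ (1 - Real.cos t) ^ (p/2) :=
        Real.one_le_rpow (by linarith) (by positivity)
      have h2 : 1 / t ^ (1+s) ≤ f t := by
        show (1:ℝ) / t ^ (1+s) ≤ (1 - Real.cos t) ^ (p/2) / t ^ (1+s)
        gcongr
      have h3 : 0 ≤ f (t + π) := hf_nonneg _ (by simp only [mem_Ioi]; linarith)
      rw [hrw]; linarith
    · have hc : Real.cos (t + π) = - Real.cos t := Real.cos_add_pi t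
      have h1 : (1:ℝ) ≤ (1 - Real.cos (t + π)) ^ (p/2) :=
        Real.one_le_rpow (by rw [hc]; linarith) (by positivity)
      have h2 : 1 / (t+π) ^ (1+s) ≤ f (t + π) := by
        show (1:ℝ) / (t+π) ^ (1+s) ≤ (1 - Real.cos (t+π)) ^ (p/2) / (t+π) ^ (1+s)
        gcongr
      have h3 : 0 ≤ f t := hf_nonneg _ ht
      rw [hrw]; linarith
  have hmono_int : (∫ t in Ioi (0:ℝ), (t + π) ^ (-(1+s)))
      ≤ ∫ t in Ioi (0:ℝ), (f t + f (t + π)) :=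
    setIntegral_mono_on hgint (hint.add hshift) measurableSet_Ioi key
  have hL : (∫ t in Ioi (0:ℝ), (t + π) ^ (-(1+s))) = π ^ (-s) / s := by
    rw [shift_setIntegral (fun t : ℝ => t ^ (-(1+s))) 0 π, zero_add,
      integral_Ioi_rpow_of_lt (by linarith) hπ, show -(1+s) + 1 = -s by ring,
      neg_div_neg_eq]
  have hsum : (∫ t in Ioi (0:ℝ), (f t + f (t + π))) = I + ∫ t in Ioi π, f t := by
    rw [integral_add hint hshift, shift_setIntegral f 0 π, zero_add]
  have htail : (∫ t in Ioi π, f t) ≤ I := by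
    apply setIntegral_mono_set hint
    · exact (ae_restrict_iff' measurableSet_Ioi).mpr (ae_of_all _ hf_nonneg)
    · exact HasSubset.Subset.eventuallyLE (Ioi_subset_Ioi hπ.le)
  have hIlb : π ^ (-s) / s ≤ 2 * I := by linarith
  have h4 : (2:ℝ) ^ (-p) ≤ π ^ (-s) := by
    have a2 : (4:ℝ) ^ (-s) ≤ π ^ (-s) := by
      rw [Real.rpow_neg hπ.le, Real.rpow_neg (by norm_num)]
      apply inv_anti₀ (Real.rpow_pos_of_pos hπ _)
      exact Real.rpow_le_rpow hπ.le (by nlinarith [Real.pi_le_four]) hs0.le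
    have a3 : (2:ℝ) ^ (-p) ≤ 4 ^ (-s) := by
      rw [show (4:ℝ) = 2 ^ (2:ℝ) by
          rw [show (2:ℝ) = ((2:ℕ):ℝ) by norm_num, Real.rpow_natCast]; norm_num,
        ← Real.rpow_mul (by norm_num)]
      apply Real.rpow_le_rpow_of_exponent_le one_le_two
      nlinarith
    linarith
  have hIlb2 : 2 ^ (-p) / ((1-ε) * p) ≤ I := by
    have b1 : (2:ℝ) ^ (-p) / s ≤ π ^ (-s) / s := by gcongr
    have b2 : (1-ε) * p = 2 * s := by rw [hs_def]; ring
    rw [b2, show (2:ℝ) ^ (-p) / (2*s) = (2 ^ (-p) / s) / 2 by rw [div_div, mul_comm]]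
    linarith
  have hfinal_lb : (1/4) * (1 / (1-ε) ^ (1/p)) ≤ I ^ (1/p) := by
    have hB0 : (0:ℝ) < 2 ^ (-p) / ((1-ε) * p) := by
      apply div_pos (Real.rpow_pos_of_pos two_pos _) (by positivity)
    have h1 : ((2:ℝ) ^ (-p) / ((1-ε) * p)) ^ (1/p) ≤ I ^ (1/p) :=
      Real.rpow_le_rpow hB0.le hIlb2 (by positivity)
    have h2 : ((2:ℝ) ^ (-p) / ((1-ε) * p)) ^ (1/p)
        = (2:ℝ)⁻¹ / ((1-ε) ^ (1/p) * p ^ (1/p)) := by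
      rw [Real.div_rpow (Real.rpow_pos_of_pos two_pos _).le (by positivity),
        Real.mul_rpow hε1'.le hp0.le, ← Real.rpow_mul (by norm_num : (0:ℝ) ≤ 2),
        show -p * (1/p) = -1 by field_simp, Real.rpow_neg_one]
    have hppow : p ^ (1/p) ≤ 2 := by
      calc p ^ (1/p) ≤ ((2:ℝ) ^ p) ^ (1/p) :=
            Real.rpow_le_rpow hp0.le (le_two_rpow hp) (by positivity)
        _ = 2 := by
            rw [← Real.rpow_mul (by norm_num), show p * (1/p) = 1 by field_simp,
              Real.rpow_one]
    have hpp0 : 0 < p ^ (1/p) := Real.rpow_pos_of_pos hp0 _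
    have h3 : (2:ℝ)⁻¹ / ((1-ε) ^ (1/p) * 2) ≤ (2:ℝ)⁻¹ / ((1-ε) ^ (1/p) * p ^ (1/p)) := by
      gcongr
    have h4 : (2:ℝ)⁻¹ / ((1-ε) ^ (1/p) * 2) = (1/4) * (1 / (1-ε) ^ (1/p)) := by
      field_simp
      ring
    linarith [h2 ▸ h1]
  exact ⟨hint, hfinal_lb, hfinal_ub⟩
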